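/- With notation as before (M a power of 2, H_0,...,H_{M−1} the cosets of the Hamming code of length M−1, C_i the characteristic function of H_i ∪ ... ∪ H_{i+c'−1} with indices mod M): if c' is odd, then each coloring C_i depends essentially on all M−1 arguments. -/

import Mathlib

/-- A finset invariant under a fixed-point-free involution has even cardinality. -/
lemma even_card_of_fpf_invol {α : Type*} [DecidableEq α] (σ : α → α)
    (hinv : ∀ a, σ (σ a) = a) (hfpf : ∀ a, σ a ≠ a) :
    ∀ (T : Finset α), (∀ a ∈ T, σ a ∈ T) → Even T.card := by
  intro T
  induction T using Finset.strongInduction with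
  | _ T ih =>
    intro hT
    rcases T.eq_empty_or_nonempty with rfl | ⟨a, ha⟩
    · simp
    · have hsa : σ a ∈ T := hT a ha
      set T' := T \ {a, σ a} with hT'
      have hsub : T' ⊂ T := by
        apply Finset.ssubset_iff_of_subset (Finset.sdiff_subset) |>.mpr
        exact ⟨a, ha, by simp [hT']⟩
      have hinvT' : ∀ b ∈ T', σ b ∈ T' := by
        intro b hb
        simp only [hT', Finset.mem_sdiff, Finset.mem_insert, Finset.mem_singleton] at hb ⊢
        push_neg at hb ⊢
        refine ⟨hT b hb.1, ?_, ?_⟩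
        · intro h; apply hb.2.2; rw [← h, hinv]
        · intro h; apply hb.2.1; have := congrArg σ h; rwa [hinv, hinv] at this
      have hcard : T.card = T'.card + 2 := by
        have h1 : ({a, σ a} : Finset α) ⊆ T := by
          intro x hx; simp at hx; rcases hx with rfl | rfl <;> assumption
        have h2 : ({a, σ a} : Finset α).card = 2 := by
          rw [Finset.card_insert_of_notMem (by simp [Ne.symm (hfpf a)]),
            Finset.card_singleton]
        have h3 : 2 ≤ T.card := h2 ▸ Finset.card_le_card h1
        rw [hT', Finset.card_sdiff_of_subset h1, h2]
        omega
      rw [hcard]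
      exact (ih T' hsub hinvT').add (by norm_num)

/-- The Hamming graph `H(n, α)`: vertices are words of length `n` over `α`,
adjacent iff they differ in exactly one coordinate. -/
def HammingGraph (n : ℕ) (α : Type*) [DecidableEq α] : SimpleGraph (Fin n → α) where
  Adj x y := hammingDist x y = 1
  symm := ⟨fun x y h => by (try simp only at h ⊢); rwa [hammingDist_comm]⟩
  loopless := ⟨fun x h => by simp only [hammingDist_self] at h; exact absurd h (by omega)⟩

instance {n : ℕ} {α : Type*} [DecidableEq α] : DecidableRel (HammingGraph n α).Adj :=
  fun x y => inferInstanceAs (Decidable (hammingDist x y = 1))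

/-- `f` is a perfect coloring of `G` with quotient matrix `S`: every vertex of
color `i` has exactly `S i j` neighbors of color `j`. -/
def IsPerfectColoring {V K : Type*} [Fintype V] [DecidableEq K] (G : SimpleGraph V)
    [DecidableRel G.Adj] (f : V → K) (S : K → K → ℕ) : Prop :=
  ∀ x : V, ∀ j : K, (Finset.univ.filter (fun y => G.Adj x y ∧ f y = j)).card = S (f x) j

/-- A function on words depends essentially on its `k`-th argument. -/
def EssentialDep {α K : Type*} {n : ℕ} (f : (Fin n → α) → K) (k : Fin n) : Prop :=
  ∃ x y : Fin n → α, (∀ t, t ≠ k → x t = y t) ∧ f x ≠ f y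


/-- If `c'` is odd, then the 2-coloring of `H(M-1,2)` whose first color class is the
union of `c'` cyclically consecutive cosets of the Hamming code depends essentially
on all `M-1` arguments. -/
theorem stmt14 (s : ℕ) (hs : 2 ≤ s) (M : ℕ) (hM : M = 2 ^ s) (hM0 : 0 < M)
    (Hcode : Submodule (ZMod 2) (Fin (M - 1) → ZMod 2))
    (hperfcode : ∀ x : Fin (M - 1) → ZMod 2, ∃! c, c ∈ Hcode ∧ hammingDist x c ≤ 1)
    (H : Fin M → Finset (Fin (M - 1) → ZMod 2))
    (h0 : ∀ x, x ∈ H ⟨0, hM0⟩ ↔ x ∈ Hcode)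
    (hcoset : ∀ j : Fin M, ∃ v, ∀ x, x ∈ H j ↔ x - v ∈ Hcode)
    (hpart : ∀ x, ∃! j : Fin M, x ∈ H j)
    (c' : ℕ) (hc1 : 0 < c') (hc2 : c' < M) (hodd : Odd c') (i : ℕ) (hi : i < M) :
    ∀ k : Fin (M - 1),
      EssentialDep
        (fun x : Fin (M - 1) → ZMod 2 =>
          if x ∈ (Finset.range c').biUnion
              (fun t => H ⟨(i + t) % M, Nat.mod_lt _ hM0⟩)
            then (0 : Fin 2) else 1) k := by
  intro k
  by_contra hdep
  unfold EssentialDep at hdep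
  push_neg at hdep
  set S : Finset (Fin (M - 1) → ZMod 2) :=
    (Finset.range c').biUnion (fun t => H ⟨(i + t) % M, Nat.mod_lt _ hM0⟩) with hSdef
  set e : Fin (M - 1) → ZMod 2 := Pi.single k 1 with hedef
  have hee : ∀ x : Fin (M - 1) → ZMod 2, x + e + e = x := by
    intro x; funext t
    have : ∀ a b : ZMod 2, a + b + b = a := by decide
    simp [this]
  -- membership is invariant under adding e
  have hS : ∀ x, (x ∈ S ↔ x + e ∈ S) := by
    intro x
    have hagree : ∀ t, t ≠ k → x t = (x + e) t := by
      intro t ht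
      simp [hedef, Pi.single_eq_of_ne ht]
    have := hdep x (x + e) hagree
    by_cases h1 : x ∈ S <;> by_cases h2 : x + e ∈ S <;>
      simp [h1, h2] at this ⊢
  choose v hv using hcoset
  simp only [ExistsUnique] at hpart
  choose ι hι using hpart
  have hι₁ : ∀ x, x ∈ H (ι x) := fun x => (hι x).1
  have hι₂ : ∀ x j, x ∈ H j → j = ι x := fun x => (hι x).2
  set σ : Fin M → Fin M := fun j => ι (v j + e) with hσdef
  have hvj : ∀ j, v j ∈ H j := by
    intro j
    rw [hv j]
    simp [Hcode.zero_mem]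
  -- key lemma: adding e maps H j to H (σ j)
  have keyA : ∀ (j : Fin M) (x : Fin (M - 1) → ZMod 2), x ∈ H j ↔ x + e ∈ H (σ j) := by
    intro j x
    have h1 : v j + e ∈ H (σ j) := hι₁ _
    have h2 : (v j + e) - v (σ j) ∈ Hcode := (hv (σ j) _).mp h1
    constructor
    · intro hx
      have hx' : x - v j ∈ Hcode := (hv j x).mp hx
      rw [hv (σ j)]
      have : (x + e) - v (σ j) = (x - v j) + ((v j + e) - v (σ j)) := by ring
      rw [this]
      exact Hcode.add_mem hx' h2
    · intro hx
      have hx' : (x + e) - v (σ j) ∈ Hcode := (hv (σ j) _).mp hx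
      rw [hv j]
      have : x - v j = ((x + e) - v (σ j)) - ((v j + e) - v (σ j)) := by ring
      rw [this]
      exact Hcode.sub_mem hx' h2
  have hinv : ∀ j, σ (σ j) = j := by
    intro j
    have h1 : v j + e ∈ H (σ j) := (keyA j (v j)).mp (hvj j)
    have h2 : v j + e + e ∈ H (σ (σ j)) := (keyA (σ j) _).mp h1
    rw [hee] at h2
    exact (hι₂ (v j) _ h2).trans (hι₂ (v j) j (hvj j)).symm
  -- e is not a codeword, so σ has no fixed point
  have hfpf : ∀ j, σ j ≠ j := by
    intro j hfix
    have h1 : v j + e ∈ H (σ j) := hι₁ _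
    rw [hfix] at h1
    have h2 : (v j + e) - v j ∈ Hcode := (hv j _).mp h1
    have he : e ∈ Hcode := by
      have : (v j + e) - v j = e := by ring
      rwa [this] at h2
    obtain ⟨c, _, huniq⟩ := hperfcode e
    have hd : hammingDist e (0 : Fin (M - 1) → ZMod 2) ≤ 1 := by
      rw [hammingDist_zero_right]
      have hsub : ({t | e t ≠ 0} : Finset (Fin (M - 1))) ⊆ {k} := by
        intro t ht
        simp only [Finset.mem_filter, Finset.mem_univ, true_and] at ht
        simp only [Finset.mem_singleton]
        by_contra h
        exact ht (by simp [hedef, Pi.single_eq_of_ne h])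
      calc hammingNorm e ≤ ({k} : Finset (Fin (M - 1))).card := Finset.card_le_card hsub
        _ = 1 := Finset.card_singleton k
    have h0' := huniq 0 ⟨Hcode.zero_mem, hd⟩
    have he' := huniq e ⟨he, by simp⟩
    have : e = (0 : Fin (M - 1) → ZMod 2) := by rw [he', h0']
    have := congrFun this k
    simp [hedef] at this
  set T : Finset (Fin M) :=
    (Finset.range c').image (fun t => (⟨(i + t) % M, Nat.mod_lt _ hM0⟩ : Fin M)) with hTdef
  have hcardT : T.card = c' := by
    rw [hTdef, Finset.card_image_of_injOn, Finset.card_range]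
    intro t ht t' ht' hmk
    simp only [Finset.mem_coe, Finset.mem_range] at ht ht'
    have hmod : (i + t) % M = (i + t') % M := congrArg Fin.val hmk
    have := (Nat.ModEq.add_left_cancel' i hmod).symm
    unfold Nat.ModEq at this
    rw [Nat.mod_eq_of_lt (ht.trans hc2), Nat.mod_eq_of_lt (ht'.trans hc2)] at this
    omega
  have hmem : ∀ x, (x ∈ S ↔ ι x ∈ T) := by
    intro x
    rw [hSdef, Finset.mem_biUnion]
    constructor
    · rintro ⟨t, ht, hx⟩
      rw [← hι₂ x _ hx]
      exact Finset.mem_image_of_mem _ ht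
    · intro hx
      rw [hTdef, Finset.mem_image] at hx
      obtain ⟨t, ht, hjt⟩ := hx
      exact ⟨t, ht, by rw [hjt]; exact hι₁ x⟩
  have hinvT : ∀ j ∈ T, σ j ∈ T := by
    intro j hj
    have hjx : ι (v j) = j := (hι₂ (v j) j (hvj j)).symm
    have h1 : v j ∈ S := (hmem (v j)).mpr (by rw [hjx]; exact hj)
    have h2 : v j + e ∈ S := (hS (v j)).mp h1
    exact (hmem (v j + e)).mp h2
  have heven : Even T.card := even_card_of_fpf_invol σ hinv hfpf T hinvT
  rw [hcardT] at heven
  exact (Nat.not_even_iff_odd.mpr hodd) heven
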